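/- Let G be a locally compact, second countable, Hausdorff topological group and let Λ ⊆ G be a closed subset with finite local complexity. Then the set X = ⋃_{P ∈ Ω₀(Λ)} P is discrete and closed in G; more precisely, for every compact set K ⊆ G the intersection K ∩ X is finite. -/

import Mathlib

open Set Filter Topology Pointwise

/-- The space `𝒞(G)` of closed subsets of a topological space `G`. -/
structure CFClosed (G : Type*) [TopologicalSpace G] where
  carrier : Set G
  isClosed' : IsClosed carrier

namespace CFClosed

variable {G : Type*} [TopologicalSpace G]

instance : SetLike (CFClosed G) G where
  coe := CFClosed.carrier
  coe_injective := fun P Q h => by cases P; cases Q; congr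

/-- The Chabauty–Fell topology on `𝒞(G)`, generated by the subbasis consisting of
`O_K = {C | C ∩ K = ∅}` for `K` compact and `O_U = {C | C ∩ U ≠ ∅}` for `U` open. -/
instance chabautyFell : TopologicalSpace (CFClosed G) :=
  TopologicalSpace.generateFrom
    ({s | ∃ K : Set G, IsCompact K ∧ s = {C : CFClosed G | (C : Set G) ∩ K = ∅}} ∪
     {s | ∃ U : Set G, IsOpen U ∧ s = {C : CFClosed G | ((C : Set G) ∩ U).Nonempty}})

end CFClosed
section Hulls

variable {G : Type*} [TopologicalSpace G] [Group G]

/-- The hull `Ω(Λ)` of a closed subset `Λ ⊆ G`: the closure in the Chabauty–Fell topology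
of the set of left translates of `Λ`. -/
def hull (Λ : CFClosed G) : Set (CFClosed G) :=
  closure {P : CFClosed G | ∃ g : G, (P : Set G) = g • (Λ : Set G)}

/-- The discrete hull `Ω₀(Λ)`: elements of the hull containing the identity. -/
def discreteHull (Λ : CFClosed G) : Set (CFClosed G) :=
  {P ∈ hull Λ | (1 : G) ∈ P}

/-- Finite local complexity: for every compact `K ⊆ G` there is a finite collection `𝓕` of
finite subsets of `G` such that every `P ∈ Ω₀(Λ)` satisfies `K ∩ P = h • F` for some
`h ∈ G`, `F ∈ 𝓕`. -/
def FLC (Λ : CFClosed G) : Prop :=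
  ∀ K : Set G, IsCompact K → ∃ 𝓕 : Set (Set G), 𝓕.Finite ∧ (∀ F ∈ 𝓕, F.Finite) ∧
    ∀ P ∈ discreteHull Λ, ∃ h : G, ∃ F ∈ 𝓕, K ∩ (P : Set G) = h • F

end Hulls

/-- For an FLC point set `Λ`, the set `X = ⋃_{P ∈ Ω₀(Λ)} P` is discrete and closed in `G`;
more precisely, `K ∩ X` is finite for every compact `K`. -/
theorem union_discreteHull_discrete (G : Type*) [TopologicalSpace G] [Group G]
    [IsTopologicalGroup G] [LocallyCompactSpace G] [SecondCountableTopology G] [T2Space G]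
    (Λ : CFClosed G) (hFLC : FLC Λ) :
    (∀ K : Set G, IsCompact K → (K ∩ ⋃ P ∈ discreteHull Λ, (P : Set G)).Finite) ∧
      IsClosed (⋃ P ∈ discreteHull Λ, (P : Set G)) ∧
      DiscreteTopology (⋃ P ∈ discreteHull Λ, (P : Set G) : Set G) := by
  classical
  set X := ⋃ P ∈ discreteHull Λ, (P : Set G) with hXdef
  have hfin : ∀ K : Set G, IsCompact K → (K ∩ X).Finite := by
    intro K hK
    obtain ⟨F𝓕, h𝓕fin, h𝓕each, hall⟩ := hFLC (K ∪ {1}) (hK.union isCompact_singleton)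
    have hD : (⋃ F ∈ F𝓕, (F⁻¹ * F : Set G)).Finite :=
      h𝓕fin.biUnion fun F hF => ((h𝓕each F hF).inv.mul (h𝓕each F hF))
    refine hD.subset ?_
    rintro x ⟨hxK, hxX⟩
    rw [hXdef, mem_iUnion₂] at hxX
    obtain ⟨P, hP0, hxP⟩ := hxX
    obtain ⟨h, F, hF𝓕, heq⟩ := hall P hP0
    have h1 : (1 : G) ∈ h • F := by
      rw [← heq]; exact ⟨Or.inr rfl, hP0.2⟩
    have hx : x ∈ h • F := by
      rw [← heq]; exact ⟨Or.inl hxK, hxP⟩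
    obtain ⟨f0, hf0, hf0e⟩ := h1
    obtain ⟨f, hf, hfe⟩ := hx
    simp only [smul_eq_mul] at hf0e hfe
    have hh : h = f0⁻¹ := eq_inv_of_mul_eq_one_left hf0e
    have hxe : x = f0⁻¹ * f := by rw [← hfe, hh]
    refine mem_iUnion₂.mpr ⟨F, hF𝓕, ?_⟩
    rw [hxe]
    exact Set.mul_mem_mul (Set.inv_mem_inv.mpr hf0) hf
  refine ⟨hfin, ?_, ?_⟩
  · refine isClosed_of_closure_subset ?_
    intro g hg
    obtain ⟨K, hKc, hKn⟩ := exists_compact_mem_nhds g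
    have hgi : g ∈ interior K := mem_interior_iff_mem_nhds.mpr hKn
    have hgc : g ∈ closure (K ∩ X) := by
      rw [mem_closure_iff] at hg ⊢
      intro o ho hgo
      obtain ⟨y, hy1, hy2⟩ := hg (o ∩ interior K) (ho.inter isOpen_interior) ⟨hgo, hgi⟩
      exact ⟨y, hy1.1, interior_subset hy1.2, hy2⟩
    rw [(hfin K hKc).isClosed.closure_eq] at hgc
    exact hgc.2
  · rw [discreteTopology_subtype_iff]
    intro x hx
    obtain ⟨K, hKc, hKn⟩ := exists_compact_mem_nhds x
    have hxi : x ∈ interior K := mem_interior_iff_mem_nhds.mpr hKn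
    set V : Set G := interior K \ ((K ∩ X) \ {x}) with hVdef
    have hVopen : IsOpen V :=
      isOpen_interior.sdiff (((hfin K hKc).subset diff_subset).isClosed)
    have hxV : x ∈ V := ⟨hxi, fun hmem => hmem.2 rfl⟩
    have hVX : V ∩ (X \ {x}) = ∅ := by
      ext y
      simp only [mem_inter_iff, mem_empty_iff_false, iff_false]
      rintro ⟨⟨hyK, hyn⟩, hyX, hyx⟩
      exact hyn ⟨⟨interior_subset hyK, hyX⟩, hyx⟩
    rw [← Filter.empty_mem_iff_bot]
    have h1 : V ∩ {x}ᶜ ∈ 𝓝[≠] x :=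
      Filter.inter_mem (mem_nhdsWithin_of_mem_nhds (hVopen.mem_nhds hxV))
        self_mem_nhdsWithin
    have h2 : (V ∩ {x}ᶜ) ∩ X ∈ 𝓝[≠] x ⊓ 𝓟 X :=
      Filter.inter_mem (Filter.mem_inf_of_left h1)
        (Filter.mem_inf_of_right (Filter.mem_principal_self X))
    have heq : (V ∩ {x}ᶜ) ∩ X = ∅ := by
      rw [← hVX]
      ext y
      simp only [mem_inter_iff, mem_compl_iff, mem_singleton_iff, mem_diff]
      tauto
    rwa [heq] at h2
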